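/- arXiv:1005.2724 — 2 statements merged into one kernel-verified Lean document; each statement's English description precedes it below -/
import Mathlib

section
/- Let R be a linear map from ℝⁿ to ℝᵗ and let 0 < ε < 1. Suppose that for all v in a linear subspace V of ℝⁿ, (1−ε)‖v‖² ≤ ‖Rv‖² ≤ (1+ε)‖v‖². Then for all v₁, v₂ ∈ V, |⟨Rv₁, Rv₂⟩ − ⟨v₁, v₂⟩| ≤ ε‖v₁‖‖v₂‖. -/
lemma aux_inner_pres {n t : ℕ} (ε : ℝ)
    (R : EuclideanSpace ℝ (Fin n) →ₗ[ℝ] EuclideanSpace ℝ (Fin t))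
    (V : Submodule ℝ (EuclideanSpace ℝ (Fin n)))
    (h : ∀ v ∈ V, (1 - ε) * ‖v‖ ^ 2 ≤ ‖R v‖ ^ 2 ∧ ‖R v‖ ^ 2 ≤ (1 + ε) * ‖v‖ ^ 2) :
    ∀ a ∈ V, ∀ b ∈ V,
      |(inner ℝ (R a) (R b) : ℝ) - (inner ℝ a b : ℝ)| ≤ ε * (‖a‖ ^ 2 + ‖b‖ ^ 2) / 2 := by
  intro a ha b hb
  obtain ⟨h1, h2⟩ := h (a + b) (V.add_mem ha hb)
  obtain ⟨h3, h4⟩ := h (a - b) (V.sub_mem ha hb)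
  rw [map_add] at h1 h2
  rw [map_sub] at h3 h4
  rw [norm_add_sq_real (R a) (R b), norm_add_sq_real a b] at h1 h2
  rw [norm_sub_sq_real (R a) (R b), norm_sub_sq_real a b] at h3 h4
  rw [abs_le]
  ring_nf at h1 h2 h3 h4 ⊢
  constructor <;> linarith

/-- If a linear map `R : ℝⁿ → ℝᵗ` satisfies
`(1−ε)‖v‖² ≤ ‖Rv‖² ≤ (1+ε)‖v‖²` for all `v` in a subspace `V`, then for all `v₁, v₂ ∈ V`,
`|⟨Rv₁, Rv₂⟩ − ⟨v₁, v₂⟩| ≤ ε‖v₁‖‖v₂‖`. -/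
theorem inner_product_preservation {n t : ℕ} (ε : ℝ) (hε0 : 0 < ε) (hε1 : ε < 1)
    (R : EuclideanSpace ℝ (Fin n) →ₗ[ℝ] EuclideanSpace ℝ (Fin t))
    (V : Submodule ℝ (EuclideanSpace ℝ (Fin n)))
    (h : ∀ v ∈ V, (1 - ε) * ‖v‖ ^ 2 ≤ ‖R v‖ ^ 2 ∧ ‖R v‖ ^ 2 ≤ (1 + ε) * ‖v‖ ^ 2) :
    ∀ v₁ ∈ V, ∀ v₂ ∈ V,
      |(inner ℝ (R v₁) (R v₂) : ℝ) - (inner ℝ v₁ v₂ : ℝ)| ≤ ε * ‖v₁‖ * ‖v₂‖ := by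
  intro v₁ h₁ v₂ h₂
  by_cases hz1 : v₁ = 0
  · simp [hz1]
  by_cases hz2 : v₂ = 0
  · simp [hz2]
  have hn1 : (0:ℝ) < ‖v₁‖ := norm_pos_iff.mpr hz1
  have hn2 : (0:ℝ) < ‖v₂‖ := norm_pos_iff.mpr hz2
  have key := aux_inner_pres ε R V h (‖v₂‖ • v₁) (V.smul_mem _ h₁) (‖v₁‖ • v₂) (V.smul_mem _ h₂)
  rw [map_smul, map_smul] at key
  simp only [real_inner_smul_left, real_inner_smul_right, norm_smul, Real.norm_eq_abs,
    abs_of_pos hn1, abs_of_pos hn2, mul_pow] at key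
  have e1 : ‖v₁‖ * (‖v₂‖ * (inner ℝ (R v₁) (R v₂) : ℝ)) - ‖v₁‖ * (‖v₂‖ * (inner ℝ v₁ v₂ : ℝ))
      = (‖v₁‖ * ‖v₂‖) * ((inner ℝ (R v₁) (R v₂) : ℝ) - (inner ℝ v₁ v₂ : ℝ)) := by ring
  have e2 : ε * (‖v₂‖ ^ 2 * ‖v₁‖ ^ 2 + ‖v₁‖ ^ 2 * ‖v₂‖ ^ 2) / 2
      = (‖v₁‖ * ‖v₂‖) * (ε * ‖v₁‖ * ‖v₂‖) := by ring
  rw [e1, e2, abs_mul, abs_of_pos (mul_pos hn1 hn2)] at key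
  exact le_of_mul_le_mul_left key (mul_pos hn1 hn2)
end

section
/- Let A be a real n×m matrix of rank r, with A = A_k + U_{r−k}Σ_{r−k}V_{r−k}ᵀ the splitting into the top-k SVD part and the tail, and set H_k = U_{r−k}Σ_{r−k}. Let R be any t×n real matrix such that R·U_k has full column rank, where U_k is the matrix of top-k left singular vectors of A. Then ‖A − P_{(RA),k}(A)‖ ≤ 2‖A − A_k‖ + ‖(RU_k)⁺ R H_k‖, where ‖·‖ is the spectral norm, C⁺ the Moore–Penrose pseudoinverse, and P_{(RA),k}(A) the best rank-k approximation of A(RA)⁺(RA). -/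
open Matrix

/-- The spectral (operator) norm of a real matrix. -/
noncomputable def specNorm {m n : Type*} [Fintype m] [Fintype n] [DecidableEq n]
    (A : Matrix m n ℝ) : ℝ :=
  ‖LinearMap.toContinuousLinearMap (Matrix.toEuclideanLin A)‖

/-- The Moore–Penrose pseudoinverse of a real matrix, characterized by the four
Penrose equations. -/
noncomputable def pinv {a b : Type*} [Fintype a] [Fintype b]
    (A : Matrix a b ℝ) : Matrix b a ℝ :=
  Classical.epsilon fun B =>
    A * B * A = A ∧ B * A * B = B ∧ (A * B)ᵀ = A * B ∧ (B * A)ᵀ = B * A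

/-- A best rank-\`k\` approximation (in spectral norm) of a matrix. -/
noncomputable def bestRankApprox {a b : Type*} [Fintype a] [Fintype b] [DecidableEq b]
    (k : ℕ) (A : Matrix a b ℝ) : Matrix a b ℝ :=
  Classical.epsilon fun B => B.rank ≤ k ∧
    ∀ C : Matrix a b ℝ, C.rank ≤ k → specNorm (A - B) ≤ specNorm (A - C)

open scoped RealInnerProductSpace
set_option linter.unusedSectionVars false
set_option maxHeartbeats 1600000

section basic
variable {a b c : Type*} [Fintype a] [Fintype b] [Fintype c]


lemma specNorm_nonneg [DecidableEq b] (A : Matrix a b ℝ) : 0 ≤ specNorm A := norm_nonneg _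

lemma norm_tel_le [DecidableEq b] (A : Matrix a b ℝ) (x : EuclideanSpace ℝ b) :
    ‖Matrix.toEuclideanLin A x‖ ≤ specNorm A * ‖x‖ := by
  exact (LinearMap.toContinuousLinearMap (Matrix.toEuclideanLin A)).le_opNorm x

lemma specNorm_le_bound [DecidableEq b] (A : Matrix a b ℝ) {c : ℝ} (hc : 0 ≤ c)
    (h : ∀ x : EuclideanSpace ℝ b, ‖Matrix.toEuclideanLin A x‖ ≤ c * ‖x‖) :
    specNorm A ≤ c := by
  apply ContinuousLinearMap.opNorm_le_bound _ hc
  intro x; simpa using h x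

lemma tel_mul_apply [DecidableEq b] [DecidableEq c] (A : Matrix a b ℝ) (B : Matrix b c ℝ)
    (x : EuclideanSpace ℝ c) :
    Matrix.toEuclideanLin (A * B) x = Matrix.toEuclideanLin A (Matrix.toEuclideanLin B x) := by
  simp [Matrix.toEuclideanLin_apply, Matrix.mulVec_mulVec]

lemma inner_tel (A : Matrix a b ℝ) [DecidableEq a] [DecidableEq b]
    (x : EuclideanSpace ℝ b) (y : EuclideanSpace ℝ a) :
    ⟪Matrix.toEuclideanLin A x, y⟫ = ⟪x, Matrix.toEuclideanLin Aᵀ y⟫ := by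
  rw [← Matrix.conjTranspose_eq_transpose_of_trivial,
    Matrix.toEuclideanLin_conjTranspose_eq_adjoint, LinearMap.adjoint_inner_right]

lemma tel_one_apply [DecidableEq b] (x : EuclideanSpace ℝ b) :
    Matrix.toEuclideanLin (1 : Matrix b b ℝ) x = x := by
  simp [Matrix.toEuclideanLin_apply]

lemma specNorm_le_one_of_sym_idem [DecidableEq b] (P : Matrix b b ℝ)
    (hsym : Pᵀ = P) (hidem : P * P = P) : specNorm P ≤ 1 := by
  apply specNorm_le_bound _ zero_le_one
  intro x
  rw [one_mul]
  set u := Matrix.toEuclideanLin P x with hu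
  have h2 : Matrix.toEuclideanLin P u = u := by
    rw [hu, ← tel_mul_apply, hidem]
  have h1 : ⟪u, u⟫ = ⟪x, u⟫ := by
    rw [hu, inner_tel, hsym, ← hu, h2]
  have h3 : ‖u‖ * ‖u‖ ≤ ‖x‖ * ‖u‖ := by
    rw [← real_inner_self_eq_norm_mul_norm, h1]
    exact real_inner_le_norm x u
  have h4 : (0:ℝ) ≤ ‖u‖ := norm_nonneg u
  nlinarith [norm_nonneg x]

lemma specNorm_le_one_of_orthonormal [DecidableEq a] [DecidableEq b] (W : Matrix a b ℝ)
    (h : Wᵀ * W = 1) : specNorm W ≤ 1 := by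
  apply specNorm_le_bound _ zero_le_one
  intro x
  rw [one_mul]
  have h1 : ⟪Matrix.toEuclideanLin W x, Matrix.toEuclideanLin W x⟫ = ⟪x, x⟫ := by
    rw [inner_tel, ← tel_mul_apply, h, tel_one_apply]
  have := real_inner_self_eq_norm_mul_norm (Matrix.toEuclideanLin W x)
  have := real_inner_self_eq_norm_mul_norm x
  nlinarith [norm_nonneg (Matrix.toEuclideanLin W x), norm_nonneg x]

lemma specNorm_transpose_le_one_of_orthonormal [DecidableEq a] [DecidableEq b]
    (W : Matrix a b ℝ) (h : Wᵀ * W = 1) : specNorm Wᵀ ≤ 1 := by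
  apply specNorm_le_bound _ zero_le_one
  intro x
  rw [one_mul]
  set u := Matrix.toEuclideanLin Wᵀ x with hu
  have hP : specNorm (W * Wᵀ) ≤ 1 := by
    apply specNorm_le_one_of_sym_idem
    · rw [transpose_mul, transpose_transpose]
    · have e1 : W * Wᵀ * (W * Wᵀ) = W * (Wᵀ * W) * Wᵀ := by
        rw [Matrix.mul_assoc, Matrix.mul_assoc, Matrix.mul_assoc]
      rw [e1, h, Matrix.mul_one]
  have h1 : ⟪u, u⟫ = ⟪x, Matrix.toEuclideanLin (W * Wᵀ) x⟫ := by
    rw [hu, inner_tel, transpose_transpose, ← tel_mul_apply]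
  have h3 : ‖u‖ * ‖u‖ ≤ ‖x‖ * ‖x‖ := by
    rw [← real_inner_self_eq_norm_mul_norm, h1]
    calc ⟪x, Matrix.toEuclideanLin (W * Wᵀ) x⟫ ≤ ‖x‖ * ‖Matrix.toEuclideanLin (W * Wᵀ) x‖ :=
      real_inner_le_norm _ _
    _ ≤ ‖x‖ * (1 * ‖x‖) :=
      mul_le_mul_of_nonneg_left ((norm_tel_le _ x).trans
        (mul_le_mul_of_nonneg_right hP (norm_nonneg x))) (norm_nonneg x)
    _ = ‖x‖ * ‖x‖ := by ring
  nlinarith [norm_nonneg u, norm_nonneg x]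
end basic

lemma key_cancel {p q : Type*} [Fintype p] [Fintype q] (A : Matrix p q ℝ)
    (S : Matrix q q ℝ) (hS : Sᵀ = S) (h1 : Aᵀ * A * S = Aᵀ * A) : A * S = A := by
  have h0 : (A * S - A)ᵀ * (A * S - A) = 0 := by
    rw [Matrix.transpose_sub, Matrix.transpose_mul, hS, Matrix.sub_mul, Matrix.mul_sub,
      Matrix.mul_sub]
    have c1 : S * Aᵀ * (A * S) = S * (Aᵀ * A) := by
      rw [Matrix.mul_assoc, ← Matrix.mul_assoc Aᵀ A S, h1]
    have c2 : S * Aᵀ * A = S * (Aᵀ * A) := by rw [Matrix.mul_assoc]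
    have c3 : Aᵀ * (A * S) = Aᵀ * A := by rw [← Matrix.mul_assoc, h1]
    rw [c1, c2, c3]
    abel
  have h2 : (A * S - A)ᴴ * (A * S - A) = 0 := by
    rwa [Matrix.conjTranspose_eq_transpose_of_trivial]
  have := Matrix.conjTranspose_mul_self_eq_zero.mp h2
  exact sub_eq_zero.mp this


lemma sym_semiinv {b : Type*} [Fintype b] [DecidableEq b] (G : Matrix b b ℝ)
    (hG : G.IsHermitian) :
    ∃ Gp : Matrix b b ℝ, Gpᵀ = Gp ∧ (Gp * G)ᵀ = Gp * G ∧ G * (Gp * G) = G ∧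
      (Gp * G) * Gp = Gp := by
  classical
  set U : Matrix b b ℝ := (Matrix.IsHermitian.eigenvectorUnitary hG : Matrix b b ℝ) with hUdef
  set e := hG.eigenvalues with hedef
  have hUU : Uᵀ * U = 1 := by
    have := Matrix.mem_unitaryGroup_iff'.mp (Matrix.IsHermitian.eigenvectorUnitary hG).2
    rwa [Matrix.star_eq_conjTranspose, Matrix.conjTranspose_eq_transpose_of_trivial] at this
  have hspec : G = U * Matrix.diagonal e * Uᵀ := by
    have h := hG.spectral_theorem
    have he : (RCLike.ofReal ∘ hG.eigenvalues : b → ℝ) = e := rfl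
    rw [he] at h
    rwa [Unitary.conjStarAlgAut_apply, Matrix.star_eq_conjTranspose, Matrix.conjTranspose_eq_transpose_of_trivial] at h
  have hmul : ∀ x y : b → ℝ, (U * Matrix.diagonal x * Uᵀ) * (U * Matrix.diagonal y * Uᵀ)
      = U * Matrix.diagonal (fun i => x i * y i) * Uᵀ := by
    intro x y
    have h1 : (U * Matrix.diagonal x * Uᵀ) * (U * Matrix.diagonal y * Uᵀ)
        = U * (Matrix.diagonal x * ((Uᵀ * U) * (Matrix.diagonal y * Uᵀ))) := by
      simp only [Matrix.mul_assoc]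
    rw [h1, hUU, Matrix.one_mul, ← Matrix.mul_assoc (Matrix.diagonal x),
      Matrix.diagonal_mul_diagonal, ← Matrix.mul_assoc]
  have htr : ∀ x : b → ℝ, (U * Matrix.diagonal x * Uᵀ)ᵀ = U * Matrix.diagonal x * Uᵀ := by
    intro x
    rw [Matrix.transpose_mul, Matrix.transpose_mul, Matrix.transpose_transpose,
      Matrix.diagonal_transpose, Matrix.mul_assoc]
  have hfun : ∀ (f g : b → ℝ), f = g →
      U * Matrix.diagonal f * Uᵀ = U * Matrix.diagonal g * Uᵀ := by
    intro f g h; rw [h]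
  refine ⟨U * Matrix.diagonal (fun i => (e i)⁻¹) * Uᵀ, htr _, ?_, ?_, ?_⟩
  · rw [hspec, hmul]; exact htr _
  · rw [hspec, hmul, hmul]
    apply hfun
    funext i
    rcases eq_or_ne (e i) 0 with h | h
    · simp [h]
    · field_simp
  · rw [hspec, hmul, hmul]
    apply hfun
    funext i
    rcases eq_or_ne (e i) 0 with h | h
    · simp [h]
    · field_simp

lemma exists_pinv {a b : Type*} [Fintype a] [Fintype b] [DecidableEq a] [DecidableEq b]
    (A : Matrix a b ℝ) :
    ∃ B : Matrix b a ℝ, A * B * A = A ∧ B * A * B = B ∧ (A * B)ᵀ = A * B ∧ (B * A)ᵀ = B * A := by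
  classical
  have hherm : (Aᵀ * A).IsHermitian := by
    have := Matrix.isHermitian_conjTranspose_mul_self A
    rwa [Matrix.conjTranspose_eq_transpose_of_trivial] at this
  obtain ⟨Gp, hGpsym, hSsym, hGS, hSGp⟩ := sym_semiinv (Aᵀ * A) hherm
  have hAS : A * (Gp * (Aᵀ * A)) = A := by
    apply key_cancel A _ hSsym
    exact hGS
  refine ⟨Gp * Aᵀ, ?_, ?_, ?_, ?_⟩
  · have h1 : A * (Gp * Aᵀ) * A = A * (Gp * (Aᵀ * A)) := by simp only [Matrix.mul_assoc]
    rw [h1, hAS]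
  · have h2 : (Gp * Aᵀ) * A * (Gp * Aᵀ) = ((Gp * (Aᵀ * A)) * Gp) * Aᵀ := by
      simp only [Matrix.mul_assoc]
    rw [h2, hSGp]
  · rw [Matrix.transpose_mul, Matrix.transpose_mul, Matrix.transpose_transpose, hGpsym,
      Matrix.mul_assoc]
  · have h3 : (Gp * Aᵀ) * A = Gp * (Aᵀ * A) := by rw [Matrix.mul_assoc]
    rw [h3, hSsym]

section best
variable {a b : Type*} [Fintype a] [Fintype b] [DecidableEq a] [DecidableEq b]

lemma abs_entry_le_specNorm (A : Matrix a b ℝ) (i : a) (j : b) : |A i j| ≤ specNorm A := by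
  have h1 : ‖Matrix.toEuclideanLin A (EuclideanSpace.single j (1:ℝ))‖ ≤ specNorm A := by
    have := norm_tel_le A (EuclideanSpace.single j (1:ℝ))
    simpa [EuclideanSpace.norm_single] using this
  have h2 : Matrix.toEuclideanLin A (EuclideanSpace.single j (1:ℝ))
      = (WithLp.equiv 2 (a → ℝ)).symm (A.mulVec (Pi.single j 1)) := by
    rw [Matrix.toEuclideanLin_apply]
    simp
  have h3 : |A i j| ≤ ‖Matrix.toEuclideanLin A (EuclideanSpace.single j (1:ℝ))‖ := by
    rw [h2]
    have hv : A.mulVec (Pi.single j 1) i = A i j := by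
      simp [Matrix.mulVec_single]
    calc |A i j| = Real.sqrt ((A.mulVec (Pi.single j 1) i)^2) := by
          rw [Real.sqrt_sq_eq_abs, hv]
      _ ≤ ‖(WithLp.equiv 2 (a → ℝ)).symm (A.mulVec (Pi.single j 1))‖ := by
          rw [EuclideanSpace.norm_eq]
          apply Real.sqrt_le_sqrt
          simp only [WithLp.equiv_symm_apply, PiLp.toLp_apply, Real.norm_eq_abs, sq_abs]
          exact Finset.single_le_sum (f := fun i' => (A.mulVec (Pi.single j 1) i')^2)
            (fun i' _ => sq_nonneg _) (Finset.mem_univ i)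
  exact h3.trans h1

lemma isUnit_of_rank_eq_card {q : Type*} [Fintype q] [DecidableEq q] (Q : Matrix q q ℝ)
    (h : Q.rank = Fintype.card q) : IsUnit Q := by
  have hr : LinearMap.range Q.mulVecLin = ⊤ := by
    apply Submodule.eq_top_of_finrank_eq
    rw [← Matrix.rank, h, Module.finrank_pi]
  have hsurj : Function.Surjective Q.mulVec := by
    intro y
    have hy : y ∈ LinearMap.range Q.mulVecLin := hr ▸ Submodule.mem_top
    obtain ⟨x, hx⟩ := hy
    exact ⟨x, by simpa using hx⟩
  exact Matrix.mulVec_surjective_iff_isUnit.mp hsurj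

lemma rank_le_isClosed {a b : Type*} [Fintype a] [Fintype b] [DecidableEq a] [DecidableEq b]
    (k : ℕ) : IsClosed {B : Matrix a b ℝ | B.rank ≤ k} := by
  rw [← isOpen_compl_iff, isOpen_iff_mem_nhds]
  intro B hB
  simp only [Set.mem_compl_iff, Set.mem_setOf_eq, not_le] at hB
  have hrk : k + 1 ≤ Module.finrank ℝ (Submodule.span ℝ (Set.range Bᵀ)) := by
    exact Nat.succ_le_of_lt (hB.trans_eq (Matrix.rank_eq_finrank_span_cols B))
  obtain ⟨s, hs_sub, hs_span, hs_li⟩ := exists_linearIndependent ℝ (Set.range Bᵀ)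
  have hs_fin : s.Finite := (Set.finite_range Bᵀ).subset hs_sub
  haveI := hs_fin.fintype
  have hcard : k + 1 ≤ Fintype.card s := by
    rw [← Set.toFinset_card, ← finrank_span_set_eq_card hs_li, hs_span]
    exact hrk
  obtain ⟨f⟩ := Function.Embedding.nonempty_of_card_le (by simpa using hcard :
    Fintype.card (Fin (k+1)) ≤ Fintype.card s)
  have hw_li : LinearIndependent ℝ (fun i : Fin (k+1) => ((f i : s) : a → ℝ)) :=
    hs_li.comp f f.injective
  have hw_mem : ∀ i : Fin (k+1), ((f i : s) : a → ℝ) ∈ Set.range Bᵀ := fun i => hs_sub (f i).2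
  choose g hg using hw_mem
  classical
  -- F C := Gram determinant of the selected columns of C
  set F : Matrix a b ℝ → ℝ := fun C => ((C.submatrix id g)ᵀ * (C.submatrix id g)).det with hF
  have hFcont : Continuous F := by
    apply Continuous.matrix_det
    exact ((continuous_id.matrix_submatrix id g).matrix_transpose).matrix_mul
      (continuous_id.matrix_submatrix id g)
  have hFB : F B ≠ 0 := by
    have hWt : (B.submatrix id g)ᵀ = fun i => ((f i : s) : a → ℝ) := by
      funext i j
      rw [← hg i]
      rfl
    have hWrank : (B.submatrix id g).rank = k + 1 := by
      rw [Matrix.rank_eq_finrank_span_cols, Matrix.col_eq_transpose, hWt]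
      exact (finrank_span_eq_card hw_li).trans (Fintype.card_fin _)
    have hD : ((B.submatrix id g)ᵀ * (B.submatrix id g)).rank = k + 1 := by
      rw [Matrix.rank_transpose_mul_self, hWrank]
    have hunit : IsUnit ((B.submatrix id g)ᵀ * (B.submatrix id g)) :=
      isUnit_of_rank_eq_card _ (by simpa using hD)
    exact isUnit_iff_ne_zero.mp ((Matrix.isUnit_iff_isUnit_det _).mp hunit)
  refine Filter.mem_of_superset ((isOpen_compl_singleton.preimage hFcont).mem_nhds hFB) ?_
  intro C hC
  simp only [Set.mem_preimage, Set.mem_compl_iff, Set.mem_singleton_iff] at hC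
  simp only [Set.mem_compl_iff, Set.mem_setOf_eq, not_le]
  have hunit : IsUnit ((C.submatrix id g)ᵀ * (C.submatrix id g)) :=
    (Matrix.isUnit_iff_isUnit_det _).mpr (isUnit_iff_ne_zero.mpr hC)
  have hD : ((C.submatrix id g)ᵀ * (C.submatrix id g)).rank = k + 1 := by
    rw [Matrix.rank_of_isUnit _ hunit, Fintype.card_fin]
  have hWrank : (C.submatrix id g).rank = k + 1 := by
    rw [← Matrix.rank_transpose_mul_self, hD]
  have hsel : C * ((1 : Matrix b b ℝ).submatrix (Equiv.refl b) g) = C.submatrix id g := by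
    rw [Matrix.mul_submatrix_one]
    rfl
  have : (C.submatrix id g).rank ≤ C.rank := by
    rw [← hsel]
    exact Matrix.rank_mul_le_left _ _
  omega

section best2
variable {a b : Type*} [Fintype a] [Fintype b] [DecidableEq a] [DecidableEq b]

lemma specNorm_continuous : Continuous fun B : Matrix a b ℝ => specNorm B := by
  let L : Matrix a b ℝ →ₗ[ℝ] (EuclideanSpace ℝ b →L[ℝ] EuclideanSpace ℝ a) :=
    (LinearMap.toContinuousLinearMap :
      (EuclideanSpace ℝ b →ₗ[ℝ] EuclideanSpace ℝ a) ≃ₗ[ℝ] _).toLinearMap.comp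
      (Matrix.toEuclideanLin : Matrix a b ℝ ≃ₗ[ℝ] _).toLinearMap
  have hL : Continuous L := L.continuous_of_finiteDimensional
  have he : (fun B : Matrix a b ℝ => specNorm B) = fun B => ‖L B‖ := rfl
  rw [he]
  exact hL.norm

lemma exists_bestRankApprox (k : ℕ) (M : Matrix a b ℝ) :
    ∃ B : Matrix a b ℝ, B.rank ≤ k ∧
      ∀ C : Matrix a b ℝ, C.rank ≤ k → specNorm (M - B) ≤ specNorm (M - C) := by
  classical
  set c := specNorm M with hc
  have hf : Continuous fun B : Matrix a b ℝ => specNorm (M - B) :=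
    specNorm_continuous.comp (continuous_const.sub continuous_id)
  set T : Set (Matrix a b ℝ) := {B | B.rank ≤ k ∧ specNorm (M - B) ≤ c} with hT
  have hT0 : (0 : Matrix a b ℝ) ∈ T := by
    constructor
    · rw [Matrix.rank_zero]; exact Nat.zero_le k
    · rw [sub_zero]
  have hTclosed : IsClosed T := (rank_le_isClosed k).inter (isClosed_le hf continuous_const)
  have hTcompact : IsCompact T := by
    have h1 : IsCompact (Set.univ.pi fun i : a => Set.univ.pi fun j : b =>
        Set.Icc (M i j - c) (M i j + c) : Set (a → b → ℝ)) :=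
      isCompact_univ_pi fun i => isCompact_univ_pi fun j => isCompact_Icc
    have hK : IsCompact {B : Matrix a b ℝ | ∀ i j, B i j ∈ Set.Icc (M i j - c) (M i j + c)} := by
      have h2 : {B : Matrix a b ℝ | ∀ i j, B i j ∈ Set.Icc (M i j - c) (M i j + c)}
          = (Set.univ.pi fun i : a => Set.univ.pi fun j : b =>
              Set.Icc (M i j - c) (M i j + c) : Set (a → b → ℝ)) := by
        ext B
        constructor
        · intro h i _ j _
          exact h i j
        · intro h i j
          exact h i (Set.mem_univ i) j (Set.mem_univ j)
      rw [h2]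
      exact h1
    apply hK.of_isClosed_subset hTclosed
    intro B hB i j
    have h3 : |M i j - B i j| ≤ c := by
      have h4 := abs_entry_le_specNorm (M - B) i j
      simp only [Matrix.sub_apply] at h4
      exact h4.trans hB.2
    rw [Set.mem_Icc]
    obtain ⟨h5, h6⟩ := abs_le.mp h3
    constructor <;> linarith
  obtain ⟨B, hBT, hBmin⟩ := hTcompact.exists_isMinOn ⟨0, hT0⟩ hf.continuousOn
  refine ⟨B, hBT.1, ?_⟩
  intro C hC
  by_cases hCle : specNorm (M - C) ≤ c
  · exact hBmin ⟨hC, hCle⟩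
  · have h0 : specNorm (M - B) ≤ specNorm (M - 0) := hBmin hT0
    rw [sub_zero] at h0
    push_neg at hCle
    exact h0.trans hCle.le
end best2


section more
variable {a b c : Type*} [Fintype a] [Fintype b] [Fintype c]
  [DecidableEq a] [DecidableEq b] [DecidableEq c]

lemma specNorm_mul_le (A : Matrix a b ℝ) (B : Matrix b c ℝ) :
    specNorm (A * B) ≤ specNorm A * specNorm B := by
  apply specNorm_le_bound _ (mul_nonneg (specNorm_nonneg A) (specNorm_nonneg B))
  intro x
  rw [tel_mul_apply, mul_assoc]
  exact (norm_tel_le A _).trans (by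
    have := norm_tel_le B x
    exact mul_le_mul_of_nonneg_left this (specNorm_nonneg A))

lemma specNorm_add_le (A B : Matrix a b ℝ) :
    specNorm (A + B) ≤ specNorm A + specNorm B := by
  unfold specNorm
  rw [map_add, map_add]
  exact norm_add_le _ _

lemma specNorm_neg (A : Matrix a b ℝ) : specNorm (-A) = specNorm A := by
  unfold specNorm
  rw [map_neg, map_neg]
  exact norm_neg _

lemma specNorm_sub_le (X Y : Matrix a b ℝ) : specNorm (X - Y) ≤ specNorm X + specNorm Y := by
  rw [sub_eq_add_neg]
  exact (specNorm_add_le X (-Y)).trans (by rw [specNorm_neg])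

lemma pinv_spec (A : Matrix a b ℝ) :
    A * pinv A * A = A ∧ pinv A * A * pinv A = pinv A ∧ (A * pinv A)ᵀ = A * pinv A ∧
      (pinv A * A)ᵀ = pinv A * A :=
  Classical.epsilon_spec (exists_pinv A)

lemma bestRankApprox_spec (k : ℕ) (M : Matrix a b ℝ) :
    (bestRankApprox k M).rank ≤ k ∧
      ∀ C : Matrix a b ℝ, C.rank ≤ k →
        specNorm (M - bestRankApprox k M) ≤ specNorm (M - C) :=
  Classical.epsilon_spec (exists_bestRankApprox k M)
end more


/-- With `A = U_k Σ_k V_kᵀ + U_{r−k} Σ_{r−k} V_{r−k}ᵀ` the SVD splitting of a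
rank-`r` matrix into top-`k` part `A_k` and tail, `H_k = U_{r−k}Σ_{r−k}`, and `R` any
`t×n` matrix with `RU_k` of full column rank,
`‖A − P_{(RA),k}(A)‖ ≤ 2‖A − A_k‖ + ‖(RU_k)⁺ R H_k‖`. -/
theorem lowrank_reduction {n m k r t : ℕ} (hk : k ≤ r)
    (A : Matrix (Fin n) (Fin m) ℝ)
    (Uk : Matrix (Fin n) (Fin k) ℝ) (Sk : Fin k → ℝ) (Vk : Matrix (Fin m) (Fin k) ℝ)
    (Ur : Matrix (Fin n) (Fin (r - k)) ℝ) (Sr : Fin (r - k) → ℝ)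
    (Vr : Matrix (Fin m) (Fin (r - k)) ℝ)
    (hUk : Ukᵀ * Uk = 1) (hUr : Urᵀ * Ur = 1) (hUkr : Ukᵀ * Ur = 0)
    (hVk : Vkᵀ * Vk = 1) (hVr : Vrᵀ * Vr = 1) (hVkr : Vkᵀ * Vr = 0)
    (hSk : ∀ i, 0 ≤ Sk i) (hSr : ∀ j, 0 ≤ Sr j) (horder : ∀ i j, Sr j ≤ Sk i)
    (hA : A = Uk * Matrix.diagonal Sk * Vkᵀ + Ur * Matrix.diagonal Sr * Vrᵀ)
    (hrank : A.rank = r)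
    (R : Matrix (Fin t) (Fin n) ℝ) (hR : (R * Uk).rank = k) :
    specNorm (A - bestRankApprox k (A * pinv (R * A) * (R * A)))
      ≤ 2 * specNorm (A - Uk * Matrix.diagonal Sk * Vkᵀ)
        + specNorm (pinv (R * Uk) * R * (Ur * Matrix.diagonal Sr)) := by
  classical
  set Ak : Matrix (Fin n) (Fin m) ℝ := Uk * Matrix.diagonal Sk * Vkᵀ with hAk
  set Hk : Matrix (Fin n) (Fin (r - k)) ℝ := Ur * Matrix.diagonal Sr with hHk
  set tail : Matrix (Fin n) (Fin m) ℝ := Hk * Vrᵀ with htail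
  have hAsub : A - Ak = tail := by rw [hA]; abel
  set aa : ℝ := specNorm (A - Ak) with haa
  set Z : Matrix (Fin k) (Fin (r - k)) ℝ := pinv (R * Uk) * R * Hk with hZ
  set bb : ℝ := specNorm Z with hbb
  -- Penrose relations for pinv (R * A)
  obtain ⟨h1, h2, h3, h4⟩ := pinv_spec (R * A)
  -- Penrose relations for pinv (R * Uk)
  obtain ⟨g1, g2, g3, g4⟩ := pinv_spec (R * Uk)
  -- pinv (R * Uk) is a left inverse
  have hQ : pinv (R * Uk) * (R * Uk) = 1 := by
    set Q : Matrix (Fin k) (Fin k) ℝ := pinv (R * Uk) * (R * Uk) with hQdef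
    have hQrank : Q.rank = k := by
      apply le_antisymm
      · exact (Matrix.rank_mul_le_right _ _).trans hR.le
      · have e1 : (R * Uk) * Q = R * Uk := by
          rw [hQdef, ← Matrix.mul_assoc]
          exact g1
        calc k = (R * Uk).rank := hR.symm
          _ = ((R * Uk) * Q).rank := by rw [e1]
          _ ≤ Q.rank := Matrix.rank_mul_le_right _ _
    have hunit : IsUnit Q := isUnit_of_rank_eq_card Q (by simpa using hQrank)
    have hQQ : Q * Q = Q := by
      rw [hQdef]
      have e2 : (pinv (R * Uk) * (R * Uk)) * (pinv (R * Uk) * (R * Uk))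
          = (pinv (R * Uk) * (R * Uk) * pinv (R * Uk)) * (R * Uk) := by
        simp only [Matrix.mul_assoc]
      rw [e2, g2]
    exact hunit.mul_left_cancel (by rw [Matrix.mul_one, hQQ])
  -- the projection P
  set P : Matrix (Fin m) (Fin m) ℝ := pinv (R * A) * (R * A) with hP
  have hPsym : Pᵀ = P := h4
  have hPP : P * P = P := by
    rw [hP]
    have e2 : (pinv (R * A) * (R * A)) * (pinv (R * A) * (R * A))
        = (pinv (R * A) * (R * A) * pinv (R * A)) * (R * A) := by
      simp only [Matrix.mul_assoc]
    rw [e2, h2]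
  have hIPsym : (1 - P)ᵀ = 1 - P := by
    rw [Matrix.transpose_sub, Matrix.transpose_one, hPsym]
  have hIPP : (1 - P) * (1 - P) = 1 - P := by
    have e0 : (1 - P) * (1 - P) = 1 * 1 - 1 * P - (P * 1 - P * P) := by
      rw [Matrix.sub_mul, Matrix.mul_sub, Matrix.mul_sub]
    rw [e0, Matrix.one_mul, Matrix.one_mul, Matrix.mul_one, hPP]
    abel
  have hnP : specNorm P ≤ 1 := specNorm_le_one_of_sym_idem P hPsym hPP
  have hnIP : specNorm (1 - P) ≤ 1 := specNorm_le_one_of_sym_idem (1 - P) hIPsym hIPP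
  -- M and its best approximation
  set M : Matrix (Fin n) (Fin m) ℝ := A * pinv (R * A) * (R * A) with hM
  have hMP : M = A * P := by rw [hM, hP, Matrix.mul_assoc]
  obtain ⟨hBr, hBmin⟩ := bestRankApprox_spec k M
  set B : Matrix (Fin n) (Fin m) ℝ := bestRankApprox k M with hB
  -- the comparison matrix X
  set X : Matrix (Fin n) (Fin m) ℝ := Uk * (pinv (R * Uk) * (R * A)) with hX
  have hXP : X * P = X := by
    rw [hX, hP]
    have e3 : Uk * (pinv (R * Uk) * (R * A)) * (pinv (R * A) * (R * A))
        = (Uk * pinv (R * Uk)) * ((R * A) * pinv (R * A) * (R * A)) := by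
      simp only [Matrix.mul_assoc]
    rw [e3, h1, Matrix.mul_assoc]
  have hAX : A - X = tail - Uk * Z * Vrᵀ := by
    have e4 : R * A = (R * Uk) * (Matrix.diagonal Sk * Vkᵀ) + R * Hk * Vrᵀ := by
      rw [hA, Matrix.mul_add, hAk]
      simp only [Matrix.mul_assoc, htail, hHk]
    have e5 : pinv (R * Uk) * (R * A) = Matrix.diagonal Sk * Vkᵀ + Z * Vrᵀ := by
      rw [e4, Matrix.mul_add, ← Matrix.mul_assoc, hQ, Matrix.one_mul, hZ]
      simp only [Matrix.mul_assoc]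
    rw [hX, e5, Matrix.mul_add, hA, hAk, ← Matrix.mul_assoc, ← Matrix.mul_assoc]
    abel
  -- first bound : ‖A - X‖ ≤ aa + bb
  have hnUk : specNorm Uk ≤ 1 := specNorm_le_one_of_orthonormal Uk hUk
  have hnVr : specNorm Vrᵀ ≤ 1 := specNorm_transpose_le_one_of_orthonormal Vr hVr
  have bound1 : specNorm (A - X) ≤ aa + bb := by
    rw [hAX, ← hAsub]
    refine (specNorm_sub_le _ _).trans ?_
    have e6 : specNorm (Uk * Z * Vrᵀ) ≤ bb := by
      calc specNorm (Uk * Z * Vrᵀ) ≤ specNorm (Uk * Z) * specNorm Vrᵀ :=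
            specNorm_mul_le _ _
        _ ≤ specNorm (Uk * Z) * 1 :=
            mul_le_mul_of_nonneg_left hnVr (specNorm_nonneg _)
        _ = specNorm (Uk * Z) := mul_one _
        _ ≤ specNorm Uk * specNorm Z := specNorm_mul_le _ _
        _ ≤ 1 * specNorm Z := mul_le_mul_of_nonneg_right hnUk (specNorm_nonneg _)
        _ = bb := by rw [one_mul, hbb]
    linarith [e6]
  -- second bound : ‖A - M‖ ≤ ‖A - X‖
  have hAM : A - M = (A - X) * (1 - P) := by
    rw [hMP, Matrix.sub_mul, Matrix.mul_sub, Matrix.mul_sub, Matrix.mul_one, Matrix.mul_one,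
      hXP]
    abel
  have bound2 : specNorm (A - M) ≤ aa + bb := by
    rw [hAM]
    calc specNorm ((A - X) * (1 - P)) ≤ specNorm (A - X) * specNorm (1 - P) :=
          specNorm_mul_le _ _
      _ ≤ specNorm (A - X) * 1 := mul_le_mul_of_nonneg_left hnIP (specNorm_nonneg _)
      _ = specNorm (A - X) := mul_one _
      _ ≤ aa + bb := bound1
  -- third bound : ‖M - B‖ ≤ ‖M - Ak * P‖ ≤ aa
  have hrankAkP : (Ak * P).rank ≤ k := by
    have e7 : Ak * P = Uk * (Matrix.diagonal Sk * Vkᵀ * P) := by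
      rw [hAk]
      simp only [Matrix.mul_assoc]
    rw [e7]
    exact (Matrix.rank_mul_le_left _ _).trans
      ((Matrix.rank_le_card_width Uk).trans (by simp))
  have bound3 : specNorm (M - B) ≤ aa := by
    refine (hBmin (Ak * P) hrankAkP).trans ?_
    have e8 : M - Ak * P = (A - Ak) * P := by
      rw [hMP, Matrix.sub_mul]
    rw [e8]
    calc specNorm ((A - Ak) * P) ≤ specNorm (A - Ak) * specNorm P := specNorm_mul_le _ _
      _ ≤ specNorm (A - Ak) * 1 := mul_le_mul_of_nonneg_left hnP (specNorm_nonneg _)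
      _ = aa := by rw [mul_one, haa]
  -- final assembly
  have final : specNorm (A - B) ≤ (aa + bb) + aa := by
    have e9 : A - B = (A - M) + (M - B) := by abel
    rw [e9]
    exact (specNorm_add_le _ _).trans (add_le_add bound2 bound3)
  linarith
end best
end
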